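/- For all n ∈ ℕ₀ and v ∈ ℂ, one has |(v)_n|/n! ≤ (1+n)^{|v|}. -/

import Mathlib

open Complex Finset

/-- The Pochhammer symbol (rising factorial) `(z)_n = z(z+1)⋯(z+n-1)`. -/
noncomputable def poch (z : ℂ) (n : ℕ) : ℂ := ∏ i ∈ Finset.range n, (z + i)

lemma telescope_prod (n : ℕ) :
    ∏ i ∈ Finset.range n, (((i : ℝ) + 2) / ((i : ℝ) + 1)) = (n : ℝ) + 1 := by
  induction n with
  | zero => simp
  | succ n ih =>
    rw [Finset.prod_range_succ, ih]
    have h : (n : ℝ) + 1 ≠ 0 := by positivity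
    field_simp
    push_cast; ring

theorem poch_upper_bound (n : ℕ) (v : ℂ) :
    ‖poch v n‖ / n.factorial ≤ (1 + (n : ℝ)) ^ ‖v‖ := by
  set r := ‖v‖ with hr
  have hr0 : 0 ≤ r := norm_nonneg v
  have hfac : (n.factorial : ℝ) = ∏ i ∈ Finset.range n, ((i : ℝ) + 1) := by
    rw [← Finset.prod_range_add_one_eq_factorial]
    push_cast
    rfl
  have h1 : ‖poch v n‖ ≤ ∏ i ∈ Finset.range n, (r + i) := by
    rw [poch]
    calc ‖∏ i ∈ Finset.range n, (v + i)‖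
        = ∏ i ∈ Finset.range n, ‖v + (i : ℂ)‖ := norm_prod _ _
      _ ≤ ∏ i ∈ Finset.range n, (r + i) := by
          apply Finset.prod_le_prod (fun i _ => norm_nonneg _)
          intro i _
          calc ‖v + (i : ℂ)‖ ≤ ‖v‖ + ‖(i : ℂ)‖ := norm_add_le _ _
            _ = r + i := by rw [hr]; simp
  have hfacpos : (0 : ℝ) < n.factorial := by positivity
  have h2 : ‖poch v n‖ / n.factorial ≤ ∏ i ∈ Finset.range n, ((r + i) / ((i : ℝ) + 1)) := by
    rw [Finset.prod_div_distrib, ← hfac]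
    gcongr
  rcases le_or_gt r 1 with hle | hlt
  · refine h2.trans ?_
    have hp1 : ∏ i ∈ Finset.range n, ((r + i) / ((i : ℝ) + 1)) ≤ 1 := by
      apply Finset.prod_le_one
      · intro i _; positivity
      · intro i _
        rw [div_le_one (by positivity)]
        linarith
    calc _ ≤ (1:ℝ) := hp1
      _ ≤ (1 + (n : ℝ)) ^ r := Real.one_le_rpow (by push_cast; linarith) hr0
  · refine h2.trans ?_
    have h3 : ∏ i ∈ Finset.range n, ((r + i) / ((i : ℝ) + 1))
        ≤ ∏ i ∈ Finset.range n, (((i : ℝ) + 2) / ((i : ℝ) + 1)) ^ r := by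
      apply Finset.prod_le_prod (fun i _ => by positivity)
      intro i _
      have hpos : (0:ℝ) ≤ 1 / ((i : ℝ) + 1) := by positivity
      have hs : -1 ≤ (1 : ℝ) / ((i : ℝ) + 1) := by linarith
      have hb := one_add_mul_self_le_rpow_one_add hs hlt.le
      have heq : ((i : ℝ) + 2) / ((i : ℝ) + 1) = 1 + 1 / ((i : ℝ) + 1) := by
        field_simp
        ring
      rw [heq]
      refine le_trans ?_ hb
      rw [div_le_iff₀ (by positivity)]
      have hi1 : (0:ℝ) < (i:ℝ) + 1 := by positivity
      field_simp
      nlinarith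
    refine h3.trans ?_
    rw [Real.finset_prod_rpow _ _ (fun i _ => by positivity), telescope_prod]
    rw [add_comm (1:ℝ)]
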